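/- Let G be a linearly ordered commutative group and X a set. Let f : ι → (X → G) and g : κ → (X → G) be families indexed by finite nonempty types, with F(x) := max_i f_i(x) and H(x) := max_j g_j(x). Assume the pair (f, g) is corner-integral: for every x ∈ X, if x is a corner root of the family f then F(x) ≤ H(x), and if x is a corner root of the family g then H(x) ≤ F(x). Then the skeleton {x ∈ X | F(x) = H(x)} coincides with the corner locus of the combined family indexed by ι ⊕ κ. (Thus a corner-integral principal skeleton is exactly a principal corner locus, i.e. a supertropical hypersurface.) -/

import Mathlib

/-- `x` is a corner root of the family `f` if two distinct members agree at `x` and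
dominate all other members there. -/
def IsCornerRoot {X A ι : Type*} [LinearOrder A] (f : ι → X → A) (x : X) : Prop :=
  ∃ i j : ι, i ≠ j ∧ f i x = f j x ∧ ∀ l : ι, f l x ≤ f i x

/-- The pointwise maximum of a finite nonempty family of functions. -/
def famSup {A X ι : Type*} [SemilatticeSup A] [Fintype ι] [Nonempty ι]
    (f : ι → X → A) (x : X) : A :=
  Finset.univ.sup' Finset.univ_nonempty fun i => f i x

lemma famSup_le_iff {A X ι : Type*} [LinearOrder A] [Fintype ι] [Nonempty ι]
    (f : ι → X → A) (x : X) (a : A) : famSup f x ≤ a ↔ ∀ i, f i x ≤ a := by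
  simp [famSup, Finset.sup'_le_iff]

lemma le_famSup {A X ι : Type*} [LinearOrder A] [Fintype ι] [Nonempty ι]
    (f : ι → X → A) (x : X) (i : ι) : f i x ≤ famSup f x :=
  Finset.le_sup' (fun i => f i x) (Finset.mem_univ i)

lemma exists_famSup {A X ι : Type*} [LinearOrder A] [Fintype ι] [Nonempty ι]
    (f : ι → X → A) (x : X) : ∃ i, famSup f x = f i x := by
  obtain ⟨i, _, hi⟩ := Finset.exists_mem_eq_sup' (Finset.univ_nonempty (α := ι))
    (fun i => f i x)
  exact ⟨i, hi⟩

/-- For a corner-integral pair (numerator family `f`, denominator family `g`), the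
skeleton `{F = H}` equals the corner locus of the combined family: a corner-integral
principal skeleton is exactly a principal corner locus (supertropical hypersurface). -/
theorem corner_integral_skeleton_eq_corner_locus {A X : Type*}
    [CommGroup A] [LinearOrder A] [IsOrderedMonoid A]
    {ι κ : Type*} [Fintype ι] [Nonempty ι] [Fintype κ] [Nonempty κ]
    (f : ι → X → A) (g : κ → X → A)
    (hf : ∀ x : X, IsCornerRoot f x → famSup f x ≤ famSup g x)
    (hg : ∀ x : X, IsCornerRoot g x → famSup g x ≤ famSup f x) :
    {x : X | famSup f x = famSup g x} = {x : X | IsCornerRoot (Sum.elim f g) x} := by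
  ext x
  simp only [Set.mem_setOf_eq]
  constructor
  · intro hx
    obtain ⟨i, hi⟩ := exists_famSup f x
    obtain ⟨j, hj⟩ := exists_famSup g x
    refine ⟨Sum.inl i, Sum.inr j, by simp, ?_, ?_⟩
    · simpa using (hi ▸ hj ▸ hx)
    · rintro (l | l) <;> simp only [Sum.elim_inl, Sum.elim_inr, ← hi]
      · exact le_famSup f x l
      · exact hx ▸ (hj ▸ le_famSup g x l : g l x ≤ famSup g x)
  · rintro ⟨i, j, hij, heq, hdom⟩
    have hfl : ∀ l : ι, f l x ≤ Sum.elim f g i x := fun l => hdom (Sum.inl l)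
    have hgl : ∀ l : κ, g l x ≤ Sum.elim f g i x := fun l => hdom (Sum.inr l)
    have hF : famSup f x ≤ Sum.elim f g i x := (famSup_le_iff f x _).2 hfl
    have hG : famSup g x ≤ Sum.elim f g i x := (famSup_le_iff g x _).2 hgl
    match i, j with
    | Sum.inl i, Sum.inl j =>
      have hroot : IsCornerRoot f x :=
        ⟨i, j, fun h => hij (by rw [h]), heq, hfl⟩
      have h1 : famSup f x = f i x := le_antisymm hF (le_famSup f x i)
      exact le_antisymm (hf x hroot) (hG.trans (h1 ▸ le_rfl))
    | Sum.inr i, Sum.inr j =>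
      have hroot : IsCornerRoot g x :=
        ⟨i, j, fun h => hij (by rw [h]), heq, hgl⟩
      have h1 : famSup g x = g i x := le_antisymm hG (le_famSup g x i)
      exact le_antisymm (hF.trans (h1 ▸ le_rfl)) (hg x hroot)
    | Sum.inl i, Sum.inr j =>
      have h1 : famSup f x = f i x := le_antisymm hF (le_famSup f x i)
      have h2 : famSup g x = g j x := le_antisymm (le_of_le_of_eq hG heq) (le_famSup g x j)
      rw [h1, h2]; exact heq
    | Sum.inr i, Sum.inl j =>
      have h1 : famSup g x = g i x := le_antisymm hG (le_famSup g x i)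
      have h2 : famSup f x = f j x := le_antisymm (le_of_le_of_eq hF heq) (le_famSup f x j)
      rw [h1, h2]; exact heq.symm
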